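/- Let E_1, E_2, K_1, K_2 be Hilbert spaces and let U be a unitary from (H²(𝔻) ⊗ E_1) ⊕ K_1 to (H²(𝔻) ⊗ E_2) ⊕ K_2 satisfying (M_z ⊗ I_{E_1}) ⊕ W_1 = U*((M_z ⊗ I_{E_2}) ⊕ W_2)U, where W_1 on K_1 and W_2 on K_2 are unitary operators. Then U has the block diagonal form (I_{H²(𝔻)} ⊗ U_1) ⊕ U_2 for some unitaries U_1 : E_1 → E_2 and U_2 : K_1 → K_2. -/

import Mathlib

open ContinuousLinearMap Filter Topology
open scoped ComplexOrder

local notation "⟪" x ", " y "⟫" => @inner ℂ _ _ x y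

theorem WithLp.equiv_fst {p : ENNReal} {α β : Type*} (x : WithLp p (α × β)) :
    (WithLp.equiv p (α × β) x).fst = x.fst := rfl

theorem WithLp.equiv_snd {p : ENNReal} {α β : Type*} (x : WithLp p (α × β)) :
    (WithLp.equiv p (α × β) x).snd = x.snd := rfl

theorem WithLp.equiv_symm_fst {p : ENNReal} {α β : Type*} (x : α × β) :
    ((WithLp.equiv p (α × β)).symm x).fst = x.fst := rfl

theorem WithLp.equiv_symm_snd {p : ENNReal} {α β : Type*} (x : α × β) :
    ((WithLp.equiv p (α × β)).symm x).snd = x.snd := rfl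

theorem WithLp.norm_equiv_symm_fst (p : ENNReal) (α β : Type*) [SeminormedAddCommGroup α]
    [SeminormedAddCommGroup β] [Fact (1 ≤ p)] (x : α) :
    ‖(WithLp.equiv p (α × β)).symm (x, 0)‖ = ‖x‖ := by
  rw [WithLp.equiv_symm_apply]; exact WithLp.norm_toLp_fst (p := p) (α := α) (β := β) (x := x)

theorem WithLp.norm_equiv_symm_snd (p : ENNReal) (α β : Type*) [SeminormedAddCommGroup α]
    [SeminormedAddCommGroup β] [Fact (1 ≤ p)] (y : β) :
    ‖(WithLp.equiv p (α × β)).symm (0, y)‖ = ‖y‖ := by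
  rw [WithLp.equiv_symm_apply]; exact WithLp.norm_toLp_snd (p := p) (α := α) (β := β) (y := y)

section Aux
variable {A B : Type*}
  [NormedAddCommGroup A] [InnerProductSpace ℂ A] [CompleteSpace A]
  [NormedAddCommGroup B] [InnerProductSpace ℂ B] [CompleteSpace B]

-- coordinates of powers of the shift
lemma shift_pow_lt
    (Sh : lp (fun _ : ℕ => A) 2 →L[ℂ] lp (fun _ : ℕ => A) 2)
    (h0 : ∀ f, Sh f 0 = 0) (hs : ∀ f n, Sh f (n + 1) = f n) :
    ∀ (n : ℕ) (f : lp (fun _ : ℕ => A) 2) (m : ℕ), m < n → ((Sh ^ n) f) m = 0 := by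
  intro n
  induction n with
  | zero => intro f m hm; omega
  | succ n ih =>
    intro f m hm
    have hp : (Sh ^ (n+1)) f = Sh ((Sh ^ n) f) := by
      rw [pow_succ']; rfl
    rw [hp]
    cases m with
    | zero => exact h0 _
    | succ m => rw [hs]; exact ih f m (by omega)

-- single in constant family
lemma single_succ_apply (n m : ℕ) (y : A) :
    (lp.single (E := fun _ : ℕ => A) 2 (n+1) y) (m+1)
      = (lp.single (E := fun _ : ℕ => A) 2 n y) m := by
  rcases eq_or_ne m n with rfl | h
  · rw [lp.single_apply_self, lp.single_apply_self]
  · rw [lp.single_apply_ne _ _ _ (by omega), lp.single_apply_ne _ _ _ h]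

lemma sh_single
    (Sh : lp (fun _ : ℕ => A) 2 →L[ℂ] lp (fun _ : ℕ => A) 2)
    (h0 : ∀ f, Sh f 0 = 0) (hs : ∀ f n, Sh f (n + 1) = f n) (n : ℕ) (y : A) :
    Sh (lp.single 2 n y) = lp.single 2 (n+1) y := by
  apply lp.ext
  funext m
  cases m with
  | zero => rw [h0, lp.single_apply_ne _ _ _ (by omega)]
  | succ m => rw [hs, single_succ_apply]

lemma inner_single_right (f : lp (fun _ : ℕ => A) 2) (i : ℕ) (y : A) :
    ⟪f, lp.single 2 i y⟫ = ⟪f i, y⟫ := by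
  rw [lp.inner_eq_tsum]
  rw [tsum_eq_single i]
  · rw [lp.single_apply_self]
  · intro j hj
    rw [lp.single_apply_ne _ _ _ hj, inner_zero_right]

lemma inner_single_left (f : lp (fun _ : ℕ => A) 2) (i : ℕ) (y : A) :
    ⟪lp.single 2 i y, f⟫ = ⟪y, f i⟫ := by
  rw [lp.inner_eq_tsum]
  rw [tsum_eq_single i]
  · rw [lp.single_apply_self]
  · intro j hj
    rw [lp.single_apply_ne _ _ _ hj, inner_zero_left]

end Aux

set_option linter.unusedSectionVars false

section Main
variable {E₁ E₂ K₁ K₂ : Type*}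
  [NormedAddCommGroup E₁] [InnerProductSpace ℂ E₁] [CompleteSpace E₁]
  [NormedAddCommGroup E₂] [InnerProductSpace ℂ E₂] [CompleteSpace E₂]
  [NormedAddCommGroup K₁] [InnerProductSpace ℂ K₁] [CompleteSpace K₁]
  [NormedAddCommGroup K₂] [InnerProductSpace ℂ K₂] [CompleteSpace K₂]
  (Sh₁ : lp (fun _ : ℕ => E₁) 2 →L[ℂ] lp (fun _ : ℕ => E₁) 2)
  (Sh₂ : lp (fun _ : ℕ => E₂) 2 →L[ℂ] lp (fun _ : ℕ => E₂) 2)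
  (W₁ : K₁ ≃ₗᵢ[ℂ] K₁) (W₂ : K₂ ≃ₗᵢ[ℂ] K₂)
  (V : WithLp 2 (lp (fun _ : ℕ => E₁) 2 × K₁) ≃ₗᵢ[ℂ]
       WithLp 2 (lp (fun _ : ℕ => E₂) 2 × K₂))

lemma aux_fst_zero
    (hSh₂0 : ∀ f, Sh₂ f 0 = 0) (hSh₂s : ∀ f n, Sh₂ f (n + 1) = f n)
    (hV : ∀ x, V ((WithLp.equiv 2 _).symm (Sh₁ x.fst, W₁ x.snd)) =
      (WithLp.equiv 2 _).symm (Sh₂ (V x).fst, W₂ (V x).snd))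
    (k : K₁) : (V ((WithLp.equiv 2 _).symm (0, k))).fst = 0 := by
  have step : ∀ c : K₁, V ((WithLp.equiv 2 _).symm (0, W₁ c)) =
      (WithLp.equiv 2 _).symm (Sh₂ (V ((WithLp.equiv 2 _).symm (0, c))).fst,
        W₂ (V ((WithLp.equiv 2 _).symm (0, c))).snd) := by
    intro c
    have h := hV ((WithLp.equiv 2 _).symm (0, c))
    simp only [WithLp.equiv_symm_fst, WithLp.equiv_symm_snd, map_zero] at h
    exact h
  have main : ∀ (n : ℕ) (c : K₁),
      (V ((WithLp.equiv 2 _).symm (0, (⇑W₁)^[n] c))).fst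
        = (Sh₂ ^ n) ((V ((WithLp.equiv 2 _).symm (0, c))).fst) := by
    intro n
    induction n with
    | zero => intro c; simp
    | succ n ih =>
      intro c
      rw [Function.iterate_succ_apply', step ((⇑W₁)^[n] c), WithLp.equiv_symm_fst, ih c,
        ← ContinuousLinearMap.mul_apply, ← pow_succ']
  apply lp.ext; funext m
  have hk : (⇑W₁)^[m+1] ((⇑W₁.symm)^[m+1] k) = k :=
    Function.LeftInverse.iterate W₁.apply_symm_apply (m+1) k
  have h2 : ((V ((WithLp.equiv 2 _).symm (0, k))).fst : ∀ _ : ℕ, E₂) m = 0 := by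
    conv_lhs => rw [← hk]
    rw [main (m+1)]
    exact shift_pow_lt Sh₂ hSh₂0 hSh₂s (m+1) _ m (by omega)
  simpa using h2

lemma aux_snd_zero
    (hfst : ∀ k' : K₂, (V.symm ((WithLp.equiv 2 _).symm (0, k'))).fst = 0)
    (f : lp (fun _ : ℕ => E₁) 2) :
    (V ((WithLp.equiv 2 _).symm (f, 0))).snd = 0 := by
  set b := (V ((WithLp.equiv 2 _).symm (f, 0))).snd with hb
  have h1 : ⟪(V ((WithLp.equiv 2 _).symm (f, 0)) : WithLp 2 _),
      ((WithLp.equiv 2 _).symm (0, b) : WithLp 2 _)⟫ = ⟪b, b⟫ := by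
    rw [WithLp.prod_inner_apply]
    simp [WithLp.equiv_symm_fst, WithLp.equiv_symm_snd, ← hb]
    exact inner_self_eq_norm_sq_to_K b
  have h2 : ⟪(V ((WithLp.equiv 2 _).symm (f, 0)) : WithLp 2 _),
      ((WithLp.equiv 2 _).symm (0, b) : WithLp 2 _)⟫ = 0 := by
    conv_lhs => rw [← V.apply_symm_apply ((WithLp.equiv 2 _).symm (0, b))]
    rw [LinearIsometryEquiv.inner_map_map, WithLp.prod_inner_apply, WithLp.ofLp_fst (V.symm _), hfst b]
    simp [WithLp.equiv_symm_fst, WithLp.equiv_symm_snd]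
  rw [h1] at h2
  exact inner_self_eq_zero.mp h2

lemma withlp_eta {α β : Type*} (p : ENNReal) (z : WithLp p (α × β)) :
    (WithLp.equiv p (α × β)).symm (z.fst, z.snd) = z := by
  have h : WithLp.equiv p (α × β) z = (z.fst, z.snd) :=
    Prod.ext (WithLp.equiv_fst z) (WithLp.equiv_snd z)
  rw [← h, Equiv.symm_apply_apply]

lemma aux_single_supp
    (hSh₁0 : ∀ f, Sh₁ f 0 = 0)
    (hSh₂0 : ∀ f, Sh₂ f 0 = 0) (hSh₂s : ∀ f n, Sh₂ f (n + 1) = f n)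
    (hVsymm : ∀ y, V.symm ((WithLp.equiv 2 _).symm (Sh₂ y.fst, W₂ y.snd)) =
      (WithLp.equiv 2 _).symm (Sh₁ (V.symm y).fst, W₁ (V.symm y).snd))
    (e : E₁) (m : ℕ) :
    (V ((WithLp.equiv 2 _).symm (lp.single 2 0 e, 0))).fst (m+1) = 0 := by
  set F := (V ((WithLp.equiv 2 _).symm (lp.single 2 0 e, 0))).fst with hF
  have key : ∀ y : E₂, ⟪(F (m+1) : E₂), y⟫ = 0 := by
    intro y
    have e1 : ⟪(F (m+1) : E₂), y⟫ = ⟪F, lp.single 2 (m+1) y⟫ :=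
      (inner_single_right F (m+1) y).symm
    have e2 : ⟪F, (lp.single 2 (m+1) y : lp (fun _ : ℕ => E₂) 2)⟫ =
        ⟪(V ((WithLp.equiv 2 _).symm (lp.single 2 0 e, 0)) : WithLp 2 _),
          ((WithLp.equiv 2 _).symm (lp.single 2 (m+1) y, 0) : WithLp 2 _)⟫ := by
      rw [WithLp.prod_inner_apply]
      simp [WithLp.equiv_symm_fst, WithLp.equiv_symm_snd, hF]
    have e3 : V.symm ((WithLp.equiv 2 _).symm ((lp.single 2 (m+1) y : lp (fun _ : ℕ => E₂) 2), 0)) =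
        (WithLp.equiv 2 _).symm
          (Sh₁ (V.symm ((WithLp.equiv 2 _).symm (lp.single 2 m y, 0))).fst,
            W₁ (V.symm ((WithLp.equiv 2 _).symm (lp.single 2 m y, 0))).snd) := by
      have h := hVsymm ((WithLp.equiv 2 _).symm (lp.single 2 m y, 0))
      simp only [WithLp.equiv_symm_fst, WithLp.equiv_symm_snd, map_zero] at h
      rw [sh_single Sh₂ hSh₂0 hSh₂s] at h
      exact h
    rw [e1, e2, ← V.apply_symm_apply
        ((WithLp.equiv 2 _).symm ((lp.single 2 (m+1) y : lp (fun _ : ℕ => E₂) 2), 0)),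
      LinearIsometryEquiv.inner_map_map, e3, WithLp.prod_inner_apply]
    simp only [WithLp.ofLp_fst, WithLp.ofLp_snd, WithLp.equiv_symm_fst, WithLp.equiv_symm_snd]
    rw [inner_single_left, hSh₁0]
    simp
  have := key (F (m+1))
  exact inner_self_eq_zero.mp this

lemma aux_key
    (hSh₁0 : ∀ f, Sh₁ f 0 = 0) (hSh₁s : ∀ f n, Sh₁ f (n + 1) = f n)
    (hSh₂0 : ∀ f, Sh₂ f 0 = 0) (hSh₂s : ∀ f n, Sh₂ f (n + 1) = f n)
    (hV : ∀ x, V ((WithLp.equiv 2 _).symm (Sh₁ x.fst, W₁ x.snd)) =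
      (WithLp.equiv 2 _).symm (Sh₂ (V x).fst, W₂ (V x).snd))
    (hVsymm : ∀ y, V.symm ((WithLp.equiv 2 _).symm (Sh₂ y.fst, W₂ y.snd)) =
      (WithLp.equiv 2 _).symm (Sh₁ (V.symm y).fst, W₁ (V.symm y).snd))
    (hsnd : ∀ f, (V ((WithLp.equiv 2 _).symm (f, 0))).snd = 0) :
    ∀ (n : ℕ) (e : E₁), V ((WithLp.equiv 2 _).symm (lp.single 2 n e, 0)) =
      (WithLp.equiv 2 _).symm
        (lp.single 2 n ((V ((WithLp.equiv 2 _).symm (lp.single 2 0 e, 0))).fst 0), 0) := by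
  intro n
  induction n with
  | zero =>
    intro e
    set z := V ((WithLp.equiv 2 _).symm (lp.single 2 0 e, 0)) with hz
    have h1 : z.fst = lp.single 2 0 ((z.fst : lp (fun _ : ℕ => E₂) 2) 0) := by
      apply lp.ext; funext m
      cases m with
      | zero => rw [lp.single_apply_self]
      | succ m =>
        rw [lp.single_apply_ne _ _ _ (by omega)]
        exact aux_single_supp Sh₁ Sh₂ W₁ W₂ V hSh₁0 hSh₂0 hSh₂s hVsymm e m
      
    have h2 : z.snd = 0 := hsnd _
    conv_lhs => rw [← withlp_eta 2 z, h2, h1]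
  | succ n ih =>
    intro e
    have h := hV ((WithLp.equiv 2 _).symm (lp.single 2 n e, 0))
    simp only [WithLp.equiv_symm_fst, WithLp.equiv_symm_snd, map_zero] at h
    rw [sh_single Sh₁ hSh₁0 hSh₁s, ih e] at h
    rw [h]
    simp only [WithLp.equiv_symm_fst, WithLp.equiv_symm_snd, map_zero,
      sh_single Sh₂ hSh₂0 hSh₂s]

noncomputable def auxG : E₁ → E₂ :=
  fun a => (V ((WithLp.equiv 2 _).symm (lp.single 2 0 a, 0))).fst 0

noncomputable def auxH : K₁ → K₂ :=
  fun k => (V ((WithLp.equiv 2 _).symm (0, k))).snd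

lemma lp_single_add (i : ℕ) (a b : E₁) :
    (lp.single (E := fun _ : ℕ => E₁) 2 i (a + b)) = lp.single 2 i a + lp.single 2 i b := by
  apply lp.ext; funext j
  rw [lp.coeFn_add, Pi.add_apply]
  rcases eq_or_ne j i with rfl | h
  · simp [lp.single_apply_self]
  · simp [lp.single_apply_ne _ _ _ h]

lemma auxG_add (a b : E₁) : auxG V (a + b) = auxG V a + auxG V b := by
  unfold auxG
  rw [lp_single_add]
  have h0 : (0 : K₁) = 0 + 0 := (add_zero _).symm
  have h : ((WithLp.equiv 2 _).symm
        ((lp.single 2 0 a + lp.single 2 0 b : lp (fun _ : ℕ => E₁) 2), (0 : K₁)) : WithLp 2 _)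
      = (WithLp.equiv 2 _).symm (lp.single 2 0 a, 0)
        + (WithLp.equiv 2 _).symm (lp.single 2 0 b, 0) := by
    conv_lhs => rw [h0]
    rfl
  rw [h, map_add]
  have h2 : ∀ x y : WithLp 2 (lp (fun _ : ℕ => E₂) 2 × K₂), (x + y).fst = x.fst + y.fst :=
    fun _ _ => rfl
  rw [h2, lp.coeFn_add, Pi.add_apply]

lemma auxG_smul (r : ℂ) (a : E₁) : auxG V (r • a) = r • auxG V a := by
  unfold auxG
  rw [lp.single_smul]
  have h0 : (0 : K₁) = r • 0 := (smul_zero _).symm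
  have h : ((WithLp.equiv 2 _).symm
        ((r • lp.single 2 0 a : lp (fun _ : ℕ => E₁) 2), (0 : K₁)) : WithLp 2 _)
      = r • (WithLp.equiv 2 _).symm (lp.single 2 0 a, 0) := by
    conv_lhs => rw [h0]
    rfl
  rw [h, map_smul]
  have h2 : ∀ (x : WithLp 2 (lp (fun _ : ℕ => E₂) 2 × K₂)), (r • x).fst = r • x.fst :=
    fun _ => rfl
  rw [h2, lp.coeFn_smul, Pi.smul_apply]

lemma auxH_add (a b : K₁) : auxH V (a + b) = auxH V a + auxH V b := by
  unfold auxH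
  have h0 : (0 : lp (fun _ : ℕ => E₁) 2) = 0 + 0 := (add_zero _).symm
  have h : ((WithLp.equiv 2 _).symm ((0 : lp (fun _ : ℕ => E₁) 2), a + b) : WithLp 2 _)
      = (WithLp.equiv 2 _).symm (0, a) + (WithLp.equiv 2 _).symm (0, b) := by
    conv_lhs => rw [h0]
    rfl
  rw [h, map_add]
  rfl

lemma auxH_smul (r : ℂ) (a : K₁) : auxH V (r • a) = r • auxH V a := by
  unfold auxH
  have h0 : (0 : lp (fun _ : ℕ => E₁) 2) = r • 0 := (smul_zero _).symm
  have h : ((WithLp.equiv 2 _).symm ((0 : lp (fun _ : ℕ => E₁) 2), r • a) : WithLp 2 _)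
      = r • (WithLp.equiv 2 _).symm (0, a) := by
    conv_lhs => rw [h0]
    rfl
  rw [h, map_smul]
  rfl

end Main

theorem stmt_7 {E₁ E₂ K₁ K₂ : Type*}
    [NormedAddCommGroup E₁] [InnerProductSpace ℂ E₁] [CompleteSpace E₁]
    [NormedAddCommGroup E₂] [InnerProductSpace ℂ E₂] [CompleteSpace E₂]
    [NormedAddCommGroup K₁] [InnerProductSpace ℂ K₁] [CompleteSpace K₁]
    [NormedAddCommGroup K₂] [InnerProductSpace ℂ K₂] [CompleteSpace K₂]
    (Sh₁ : lp (fun _ : ℕ => E₁) 2 →L[ℂ] lp (fun _ : ℕ => E₁) 2)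
    (hSh₁0 : ∀ f, Sh₁ f 0 = 0) (hSh₁ : ∀ f n, Sh₁ f (n + 1) = f n)
    (Sh₂ : lp (fun _ : ℕ => E₂) 2 →L[ℂ] lp (fun _ : ℕ => E₂) 2)
    (hSh₂0 : ∀ f, Sh₂ f 0 = 0) (hSh₂ : ∀ f n, Sh₂ f (n + 1) = f n)
    (W₁ : K₁ ≃ₗᵢ[ℂ] K₁) (W₂ : K₂ ≃ₗᵢ[ℂ] K₂)
    (U : WithLp 2 (lp (fun _ : ℕ => E₁) 2 × K₁) ≃ₗᵢ[ℂ]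
         WithLp 2 (lp (fun _ : ℕ => E₂) 2 × K₂))
    (hU : ∀ x : WithLp 2 (lp (fun _ : ℕ => E₁) 2 × K₁),
      (WithLp.equiv 2 _).symm
          (Sh₁ (WithLp.equiv 2 _ x).1, W₁ (WithLp.equiv 2 _ x).2) =
        U.symm ((WithLp.equiv 2 _).symm
          (Sh₂ (WithLp.equiv 2 _ (U x)).1, W₂ (WithLp.equiv 2 _ (U x)).2))) :
    ∃ (U₁ : E₁ ≃ₗᵢ[ℂ] E₂) (U₂ : K₁ ≃ₗᵢ[ℂ] K₂),
      ∀ x : WithLp 2 (lp (fun _ : ℕ => E₁) 2 × K₁),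
        (∀ n : ℕ, (WithLp.equiv 2 _ (U x)).1 n = U₁ ((WithLp.equiv 2 _ x).1 n)) ∧
        (WithLp.equiv 2 _ (U x)).2 = U₂ ((WithLp.equiv 2 _ x).2) := by
  simp only [WithLp.equiv_fst, WithLp.equiv_snd] at hU ⊢
  have hU' : ∀ x, U ((WithLp.equiv 2 _).symm (Sh₁ x.fst, W₁ x.snd)) =
      (WithLp.equiv 2 _).symm (Sh₂ (U x).fst, W₂ (U x).snd) := by
    intro x
    have h := congrArg U (hU x)
    rwa [U.apply_symm_apply] at h
  have hUsymm : ∀ y, U.symm ((WithLp.equiv 2 _).symm (Sh₂ y.fst, W₂ y.snd)) =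
      (WithLp.equiv 2 _).symm (Sh₁ (U.symm y).fst, W₁ (U.symm y).snd) := by
    intro y
    have h := hU (U.symm y)
    rw [U.apply_symm_apply] at h
    exact h.symm
  have hUsymm2 : ∀ x, U.symm.symm ((WithLp.equiv 2 _).symm (Sh₁ x.fst, W₁ x.snd)) =
      (WithLp.equiv 2 _).symm (Sh₂ (U.symm.symm x).fst, W₂ (U.symm.symm x).snd) := by
    simp only [LinearIsometryEquiv.symm_symm]; exact hU'
  have hK : ∀ k : K₁, (U ((WithLp.equiv 2 _).symm (0, k))).fst = 0 :=
    aux_fst_zero Sh₁ Sh₂ W₁ W₂ U hSh₂0 hSh₂ hU'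
  have hK' : ∀ k : K₂, (U.symm ((WithLp.equiv 2 _).symm (0, k))).fst = 0 :=
    aux_fst_zero Sh₂ Sh₁ W₂ W₁ U.symm hSh₁0 hSh₁ hUsymm
  have hK2 : ∀ k : K₁, (U.symm.symm ((WithLp.equiv 2 _).symm (0, k))).fst = 0 := by
    simp only [LinearIsometryEquiv.symm_symm]; exact hK
  have hE : ∀ f, (U ((WithLp.equiv 2 _).symm (f, 0))).snd = 0 :=
    aux_snd_zero U hK'
  have hE' : ∀ g, (U.symm ((WithLp.equiv 2 _).symm (g, 0))).snd = 0 :=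
    aux_snd_zero U.symm hK2
  have keyU : ∀ (n : ℕ) (a : E₁), U ((WithLp.equiv 2 _).symm (lp.single 2 n a, 0)) =
      (WithLp.equiv 2 _).symm (lp.single 2 n (auxG U a), 0) :=
    aux_key Sh₁ Sh₂ W₁ W₂ U hSh₁0 hSh₁ hSh₂0 hSh₂ hU' hUsymm hE
  have keyV : ∀ (n : ℕ) (a : E₂), U.symm ((WithLp.equiv 2 _).symm (lp.single 2 n a, 0)) =
      (WithLp.equiv 2 _).symm (lp.single 2 n (auxG U.symm a), 0) :=
    aux_key Sh₂ Sh₁ W₂ W₁ U.symm hSh₂0 hSh₂ hSh₁0 hSh₁ hUsymm hUsymm2 hE'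
  -- inverses for the E-part
  have hgl : ∀ a : E₁, auxG U.symm (auxG U a) = a := by
    intro a
    show (U.symm ((WithLp.equiv 2 _).symm (lp.single 2 0 (auxG U a), 0))).fst 0 = a
    rw [← keyU 0 a, U.symm_apply_apply, WithLp.equiv_symm_fst, lp.single_apply_self]
  have hgr : ∀ a : E₂, auxG U (auxG U.symm a) = a := by
    intro a
    show (U ((WithLp.equiv 2 _).symm (lp.single 2 0 (auxG U.symm a), 0))).fst 0 = a
    rw [← keyV 0 a, U.apply_symm_apply, WithLp.equiv_symm_fst, lp.single_apply_self]
  -- reconstruction for the K-part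
  have hz : ∀ k : K₁, U ((WithLp.equiv 2 _).symm (0, k)) =
      (WithLp.equiv 2 _).symm (0, auxH U k) := by
    intro k
    have h := withlp_eta 2 (U ((WithLp.equiv 2 _).symm (0, k)))
    rw [hK k] at h
    exact h.symm
  have hz' : ∀ k : K₂, U.symm ((WithLp.equiv 2 _).symm (0, k)) =
      (WithLp.equiv 2 _).symm (0, auxH U.symm k) := by
    intro k
    have h := withlp_eta 2 (U.symm ((WithLp.equiv 2 _).symm (0, k)))
    rw [hK' k] at h
    exact h.symm
  have htl : ∀ k : K₁, auxH U.symm (auxH U k) = k := by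
    intro k
    show (U.symm ((WithLp.equiv 2 _).symm (0, auxH U k))).snd = k
    rw [← hz k, U.symm_apply_apply, WithLp.equiv_symm_snd]
  have htr : ∀ k : K₂, auxH U (auxH U.symm k) = k := by
    intro k
    show (U ((WithLp.equiv 2 _).symm (0, auxH U.symm k))).snd = k
    rw [← hz' k, U.apply_symm_apply, WithLp.equiv_symm_snd]
  -- norms
  have htoReal : (0:ℝ) < (2 : ENNReal).toReal := by norm_num
  have hn₁ : ∀ a : E₁, ‖auxG U a‖ = ‖a‖ := by
    intro a
    calc ‖auxG U a‖ = ‖(lp.single 2 0 (auxG U a) : lp (fun _ : ℕ => E₂) 2)‖ :=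
          (lp.norm_single (p := 2) (E := fun _ : ℕ => E₂) (by norm_num) 0 (auxG U a)).symm
      _ = ‖((WithLp.equiv 2 _).symm ((lp.single 2 0 (auxG U a) : lp (fun _ : ℕ => E₂) 2),
            (0 : K₂)) : WithLp 2 _)‖ := (WithLp.norm_equiv_symm_fst 2 _ _ _).symm
      _ = ‖U ((WithLp.equiv 2 _).symm (lp.single 2 0 a, 0))‖ := by rw [keyU 0 a]
      _ = ‖((WithLp.equiv 2 _).symm ((lp.single 2 0 a : lp (fun _ : ℕ => E₁) 2),
            (0 : K₁)) : WithLp 2 _)‖ := U.norm_map _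
      _ = ‖(lp.single 2 0 a : lp (fun _ : ℕ => E₁) 2)‖ := WithLp.norm_equiv_symm_fst 2 _ _ _
      _ = ‖a‖ := lp.norm_single (p := 2) (E := fun _ : ℕ => E₁) (by norm_num) 0 a
  have hn₂ : ∀ k : K₁, ‖auxH U k‖ = ‖k‖ := by
    intro k
    calc ‖auxH U k‖ = ‖((WithLp.equiv 2 _).symm ((0 : lp (fun _ : ℕ => E₂) 2), auxH U k) :
            WithLp 2 _)‖ := (WithLp.norm_equiv_symm_snd 2 _ _ _).symm
      _ = ‖U ((WithLp.equiv 2 _).symm (0, k))‖ := by rw [hz k]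
      _ = ‖((WithLp.equiv 2 _).symm ((0 : lp (fun _ : ℕ => E₁) 2), k) : WithLp 2 _)‖ :=
          U.norm_map _
      _ = ‖k‖ := WithLp.norm_equiv_symm_snd 2 _ _ _
  -- inner product preservation for auxG U
  have hip : ∀ (a b : E₁), ⟪auxG U a, auxG U b⟫ = ⟪a, b⟫ := by
    intro a b
    have h1 : ⟪(lp.single 2 0 (auxG U a) : lp (fun _ : ℕ => E₂) 2),
        (lp.single 2 0 (auxG U b) : lp (fun _ : ℕ => E₂) 2)⟫ = ⟪auxG U a, auxG U b⟫ := by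
      rw [inner_single_right, lp.single_apply_self]
    have h2 : ⟪((WithLp.equiv 2 _).symm ((lp.single 2 0 (auxG U a) : lp (fun _ : ℕ => E₂) 2),
          (0 : K₂)) : WithLp 2 _),
        ((WithLp.equiv 2 _).symm ((lp.single 2 0 (auxG U b) : lp (fun _ : ℕ => E₂) 2),
          (0 : K₂)) : WithLp 2 _)⟫
        = ⟪(lp.single 2 0 (auxG U a) : lp (fun _ : ℕ => E₂) 2),
            (lp.single 2 0 (auxG U b) : lp (fun _ : ℕ => E₂) 2)⟫ := by
      rw [WithLp.prod_inner_apply]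
      simp [WithLp.equiv_symm_fst, WithLp.equiv_symm_snd]
    have h3 : ⟪((WithLp.equiv 2 _).symm ((lp.single 2 0 a : lp (fun _ : ℕ => E₁) 2),
          (0 : K₁)) : WithLp 2 _),
        ((WithLp.equiv 2 _).symm ((lp.single 2 0 b : lp (fun _ : ℕ => E₁) 2),
          (0 : K₁)) : WithLp 2 _)⟫
        = ⟪(lp.single 2 0 a : lp (fun _ : ℕ => E₁) 2),
            (lp.single 2 0 b : lp (fun _ : ℕ => E₁) 2)⟫ := by
      rw [WithLp.prod_inner_apply]
      simp [WithLp.equiv_symm_fst, WithLp.equiv_symm_snd]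
    have h4 : ⟪(lp.single 2 0 a : lp (fun _ : ℕ => E₁) 2),
        (lp.single 2 0 b : lp (fun _ : ℕ => E₁) 2)⟫ = ⟪a, b⟫ := by
      rw [inner_single_right, lp.single_apply_self]
    rw [← h1, ← h2, ← keyU 0 a, ← keyU 0 b, LinearIsometryEquiv.inner_map_map, h3, h4]
  -- coordinatewise formula on the first summand
  have hcoord : ∀ (f : lp (fun _ : ℕ => E₁) 2) (n : ℕ),
      ((U ((WithLp.equiv 2 _).symm (f, 0))).fst : ∀ _ : ℕ, E₂) n = auxG U (f n) := by
    intro f n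
    apply ext_inner_right ℂ
    intro v
    have e1 : ⟪((U ((WithLp.equiv 2 _).symm (f, 0))).fst : ∀ _ : ℕ, E₂) n, v⟫
        = ⟪(U ((WithLp.equiv 2 _).symm (f, 0))).fst, (lp.single 2 n v : lp (fun _ : ℕ => E₂) 2)⟫ :=
      (inner_single_right _ n v).symm
    have e2 : ⟪(U ((WithLp.equiv 2 _).symm (f, 0))).fst,
          (lp.single 2 n v : lp (fun _ : ℕ => E₂) 2)⟫
        = ⟪(U ((WithLp.equiv 2 _).symm (f, 0)) : WithLp 2 _),
            ((WithLp.equiv 2 _).symm ((lp.single 2 n v : lp (fun _ : ℕ => E₂) 2), (0 : K₂)) :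
              WithLp 2 _)⟫ := by
      rw [WithLp.prod_inner_apply]
      simp [WithLp.equiv_symm_fst, WithLp.equiv_symm_snd]
    have e3 : ⟪(U ((WithLp.equiv 2 _).symm (f, 0)) : WithLp 2 _),
          ((WithLp.equiv 2 _).symm ((lp.single 2 n v : lp (fun _ : ℕ => E₂) 2), (0 : K₂)) :
            WithLp 2 _)⟫
        = ⟪((WithLp.equiv 2 _).symm (f, 0) : WithLp 2 _),
            ((WithLp.equiv 2 _).symm ((lp.single 2 n (auxG U.symm v) : lp (fun _ : ℕ => E₁) 2),
              (0 : K₁)) : WithLp 2 _)⟫ := by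
      conv_lhs => rw [← U.apply_symm_apply ((WithLp.equiv 2 _).symm
        ((lp.single 2 n v : lp (fun _ : ℕ => E₂) 2), (0 : K₂)))]
      rw [LinearIsometryEquiv.inner_map_map, keyV n v]
    have e4 : ⟪((WithLp.equiv 2 _).symm (f, 0) : WithLp 2 _),
          ((WithLp.equiv 2 _).symm ((lp.single 2 n (auxG U.symm v) : lp (fun _ : ℕ => E₁) 2),
            (0 : K₁)) : WithLp 2 _)⟫
        = ⟪f n, auxG U.symm v⟫ := by
      rw [WithLp.prod_inner_apply]
      simp only [WithLp.ofLp_fst, WithLp.ofLp_snd, WithLp.equiv_symm_fst, WithLp.equiv_symm_snd, inner_zero_right, add_zero]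
      exact inner_single_right f n (auxG U.symm v)
    rw [e1, e2, e3, e4, ← hip (f n) (auxG U.symm v), hgr v]
  -- decomposition of a general element
  have hdec : ∀ x : WithLp 2 (lp (fun _ : ℕ => E₁) 2 × K₁),
      U x = U ((WithLp.equiv 2 _).symm (x.fst, 0)) + U ((WithLp.equiv 2 _).symm (0, x.snd)) := by
    intro x
    rw [← map_add]
    congr 1
    have h : ((WithLp.equiv 2 _).symm (x.fst, (0 : K₁)) : WithLp 2 _)
        + (WithLp.equiv 2 _).symm ((0 : lp (fun _ : ℕ => E₁) 2), x.snd)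
        = (WithLp.equiv 2 _).symm (x.fst + 0, 0 + x.snd) := rfl
    rw [h, add_zero, zero_add, withlp_eta]
  refine ⟨{ toFun := auxG U
            map_add' := auxG_add U
            map_smul' := auxG_smul U
            invFun := auxG U.symm
            left_inv := hgl
            right_inv := hgr
            norm_map' := hn₁ },
    { toFun := auxH U
      map_add' := auxH_add U
      map_smul' := auxH_smul U
      invFun := auxH U.symm
      left_inv := htl
      right_inv := htr
      norm_map' := hn₂ }, ?_⟩
  intro x
  constructor
  · intro n
    show ((U x).fst : ∀ _ : ℕ, E₂) n = auxG U (x.fst n)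
    have hadd : (U ((WithLp.equiv 2 _).symm (x.fst, 0)) + U ((WithLp.equiv 2 _).symm (0, x.snd))).fst
        = (U ((WithLp.equiv 2 _).symm (x.fst, 0))).fst + (U ((WithLp.equiv 2 _).symm (0, x.snd))).fst :=
      rfl
    rw [hdec x, hadd, lp.coeFn_add, Pi.add_apply, hcoord x.fst n, hK x.snd]
    simp
  · show (U x).snd = auxH U x.snd
    have hadd : (U ((WithLp.equiv 2 _).symm (x.fst, 0)) + U ((WithLp.equiv 2 _).symm (0, x.snd))).snd
        = (U ((WithLp.equiv 2 _).symm (x.fst, 0))).snd + (U ((WithLp.equiv 2 _).symm (0, x.snd))).snd :=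
      rfl
    rw [hdec x, hadd, hE x.fst, zero_add]
    rfl
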